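/- arXiv:2203.09874 — 2 statements merged into one kernel-verified Lean document; each statement's English description precedes it below -/
import Mathlib

section
/- Let Ω ⊆ ℝ^d be a measurable set of finite Lebesgue measure, let β : ℝ → ℝ be nondecreasing and continuous with β(0) = 0, let π : ℝ → ℝ be Lipschitz with Lipschitz constant K ≥ 0, and let h be a real number with 0 < h < 1 and h·K < 1. Then for every G ∈ L²(Ω) there exists a function φ ∈ L²(Ω), unique up to equality almost everywhere, such that φ(x) + h·φ(x) + h²·β(φ(x)) + h²·π(φ(x)) = G(x) for almost every x ∈ Ω; moreover the compositions β ∘ φ and π ∘ φ belong to L²(Ω). -/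
open MeasureTheory Filter

/-- Lemma 3.2: for `Ω ⊆ ℝᵈ` measurable of finite measure, `β` nondecreasing continuous
with `β 0 = 0`, `π` `K`-Lipschitz, `0 < h < 1` with `h K < 1`, and `G ∈ L²(Ω)`, there is
a function `φ ∈ L²(Ω)`, unique up to a.e. equality, with
`φ + h φ + h² β(φ) + h² π(φ) = G` a.e. in `Ω`, and moreover `β ∘ φ, π ∘ φ ∈ L²(Ω)`. -/
theorem discrete_phase_equation_L2_existence_uniqueness
    (d : ℕ) (Ω : Set (Fin d → ℝ)) (hΩmeas : MeasurableSet Ω)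
    (hΩfin : volume Ω < ⊤)
    (β π : ℝ → ℝ) (hβmono : Monotone β) (hβcont : Continuous β) (hβ0 : β 0 = 0)
    (K : ℝ) (hK : 0 ≤ K) (hπ : ∀ x y : ℝ, |π x - π y| ≤ K * |x - y|)
    (h : ℝ) (hh0 : 0 < h) (hh1 : h < 1) (hhK : h * K < 1)
    (G : (Fin d → ℝ) → ℝ) (hG : MemLp G 2 (volume.restrict Ω)) :
    ∃ φ : (Fin d → ℝ) → ℝ,
      MemLp φ 2 (volume.restrict Ω) ∧
      (∀ᵐ x ∂(volume.restrict Ω),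
        φ x + h * φ x + h ^ 2 * β (φ x) + h ^ 2 * π (φ x) = G x) ∧
      MemLp (β ∘ φ) 2 (volume.restrict Ω) ∧
      MemLp (π ∘ φ) 2 (volume.restrict Ω) ∧
      ∀ ψ : (Fin d → ℝ) → ℝ,
        MemLp ψ 2 (volume.restrict Ω) →
        (∀ᵐ x ∂(volume.restrict Ω),
          ψ x + h * ψ x + h ^ 2 * β (ψ x) + h ^ 2 * π (ψ x) = G x) →
        ψ =ᵐ[volume.restrict Ω] φ := by
  haveI : IsFiniteMeasure (volume.restrict Ω) :=
    ⟨by simpa [Measure.restrict_apply_univ] using hΩfin⟩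
  set μ := volume.restrict Ω
  -- the scalar function F
  set F : ℝ → ℝ := fun s => s + h * s + h ^ 2 * β s + h ^ 2 * π s with hF
  set c : ℝ := 1 + h - h ^ 2 * K with hc
  have hc1 : 1 ≤ c := by nlinarith
  have hc0 : 0 < c := lt_of_lt_of_le one_pos hc1
  -- key inequality
  have key : ∀ s t : ℝ, s ≤ t → c * (t - s) ≤ F t - F s := by
    intro s t hst
    have hβ' : β s ≤ β t := hβmono hst
    have hπ' := hπ t s
    rw [abs_of_nonneg (by linarith : (0:ℝ) ≤ t - s)] at hπ'
    have hπ'' : -(K * (t - s)) ≤ π t - π s := (abs_le.mp hπ').1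
    simp only [hF, hc]
    nlinarith [sq_nonneg h]
  have hmono : StrictMono F := by
    intro s t hst
    have := key s t hst.le
    nlinarith
  have hπcont : Continuous π := by
    have : LipschitzWith (Real.toNNReal K) π :=
      LipschitzWith.of_dist_le_mul (by
        intro x y
        simpa [Real.dist_eq, Real.coe_toNNReal K hK] using hπ x y)
    exact this.continuous
  have hFcont : Continuous F := by
    simp only [hF]
    continuity
  have htop : Tendsto F atTop atTop := by
    apply tendsto_atTop_mono' _ (eventually_ge_atTop 0 |>.mono fun s hs => ?_)
      (tendsto_atTop_add_const_left _ (F 0) ((tendsto_id).const_mul_atTop hc0))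
    have := key 0 s hs
    simp only [id]
    linarith
  have hbot : Tendsto F atBot atBot := by
    apply tendsto_atBot_mono' _ (eventually_le_atBot 0 |>.mono fun s hs => ?_)
      (tendsto_atBot_add_const_left _ (F 0) ((tendsto_id).const_mul_atBot hc0))
    have := key s 0 hs
    simp only [id]
    linarith
  have hsurj : Function.Surjective F := hFcont.surjective htop hbot
  set e := StrictMono.orderIsoOfSurjective F hmono hsurj with he
  set φ : (Fin d → ℝ) → ℝ := fun x => e.symm (G x) with hφ
  have hFφ : ∀ x, F (φ x) = G x := fun x =>
    StrictMono.orderIsoOfSurjective_self_symm_apply F hmono hsurj (G x)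
  -- pointwise bound on φ
  have hbound : ∀ x, |φ x| ≤ |G x| + |F 0| := by
    intro x
    rcases le_or_gt 0 (φ x) with hx | hx
    · have := key 0 (φ x) hx
      rw [hFφ x] at this
      have : φ x ≤ G x - F 0 := by nlinarith
      have h2 : |φ x| = φ x := abs_of_nonneg hx
      calc |φ x| = φ x := h2
        _ ≤ G x - F 0 := this
        _ ≤ |G x| + |F 0| := by
            have := le_abs_self (G x); have := neg_abs_le (F 0); linarith
    · have := key (φ x) 0 hx.le
      rw [hFφ x] at this
      have h3 : F 0 - G x ≥ c * (0 - φ x) := this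
      have : -φ x ≤ F 0 - G x := by nlinarith
      have h2 : |φ x| = -φ x := abs_of_neg hx
      calc |φ x| = -φ x := h2
        _ ≤ F 0 - G x := this
        _ ≤ |G x| + |F 0| := by
            have := neg_abs_le (G x); have := le_abs_self (F 0); linarith
  have hecont : Continuous (e.symm : ℝ → ℝ) := OrderIso.continuous _
  have hφmeas : AEStronglyMeasurable φ μ :=
    hecont.comp_aestronglyMeasurable hG.aestronglyMeasurable
  have hGabs : MemLp (fun x => |G x| + |F 0|) 2 μ := hG.norm.add (memLp_const _)
  have hφmem : MemLp φ 2 μ := by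
    refine hGabs.of_le hφmeas (Eventually.of_forall fun x => ?_)
    have h1 := hbound x
    have h2 : (0:ℝ) ≤ |G x| + |F 0| := by positivity
    simpa [Real.norm_eq_abs, abs_of_nonneg h2] using h1
  have hπφmem : MemLp (π ∘ φ) 2 μ := by
    have hmeas : AEStronglyMeasurable (π ∘ φ) μ := hπcont.comp_aestronglyMeasurable hφmeas
    have hbig : MemLp (fun x => |π 0| + K * (|G x| + |F 0|)) 2 μ :=
      (memLp_const (|π 0|)).add (hGabs.const_mul K)
    refine hbig.of_le hmeas (Eventually.of_forall fun x => ?_)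
    have h1 : |π (φ x) - π 0| ≤ K * |φ x - 0| := hπ (φ x) 0
    have h1' : |π (φ x) - π 0| ≤ K * |φ x| := by simpa using h1
    have h2 : |π (φ x)| ≤ |π 0| + K * |φ x| := by
      have := abs_sub_abs_le_abs_sub (π (φ x)) (π 0)
      linarith
    have h3 : K * |φ x| ≤ K * (|G x| + |F 0|) := by
      exact mul_le_mul_of_nonneg_left (hbound x) hK
    have h4 : (0:ℝ) ≤ |π 0| + K * (|G x| + |F 0|) := by positivity
    simp only [Function.comp, Real.norm_eq_abs, abs_of_nonneg h4]
    linarith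
  have hβφmem : MemLp (β ∘ φ) 2 μ := by
    have heq : β ∘ φ = fun x => (1 / h ^ 2) * (G x - (φ x + h * φ x) - h ^ 2 * π (φ x)) := by
      funext x
      have := hFφ x
      simp only [hF] at this
      show β (φ x) = _
      field_simp
      linarith
    rw [heq]
    exact ((hG.sub (hφmem.add (hφmem.const_mul h))).sub ((hπφmem).const_mul (h ^ 2))).const_mul _
  refine ⟨φ, hφmem, Eventually.of_forall fun x => hFφ x, hβφmem, hπφmem, ?_⟩
  intro ψ hψmem hψeq
  filter_upwards [hψeq] with x hx
  have : F (ψ x) = F (φ x) := by rw [hFφ x]; exact hx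
  exact hmono.injective this
end

section
/- Let X be a real Banach space, T > 0, and let g : [0, T] → X be Bochner integrable. Let f : [0, T] → X satisfy f(t) = f(0) + ∫₀ᵗ g(s) ds for all t ∈ [0, T]. For a natural number N ≥ 1 set h = T/N and define the piecewise constant average f̄_h : (0, T] → X by f̄_h(t) = (1/h)·∫_{(k−1)h}^{kh} f(s) ds for t ∈ ((k−1)h, kh], 1 ≤ k ≤ N. Then (∫₀^T ‖f̄_h(t) − f(t)‖² dt)^{1/2} ≤ h^{1/2} · ∫₀^T ‖g(s)‖ ds. -/
open MeasureTheory intervalIntegral Set Finset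

/-- `W^{1,1}` approximation estimate for local averages: if `f(t) = f(0) + ∫₀ᵗ g` with
`g` Bochner integrable on `[0, T]`, `h = T/N`, and `f̄_h` is the piecewise constant local
average of `f`, then `‖f̄_h - f‖_{L²(0,T;X)} ≤ h^{1/2} ∫₀ᵀ ‖g‖`. -/
theorem piecewise_average_L2_error
    {X : Type*} [NormedAddCommGroup X] [NormedSpace ℝ X] [CompleteSpace X]
    (T : ℝ) (hT : 0 < T) (g f : ℝ → X)
    (hg : MeasureTheory.IntegrableOn g (Set.Icc 0 T))
    (hf : ∀ t ∈ Set.Icc (0 : ℝ) T, f t = f 0 + ∫ s in (0 : ℝ)..t, g s)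
    (N : ℕ) (hN : 1 ≤ N) (h : ℝ) (hhdef : h = T / N)
    (fbar : ℝ → X)
    (hfbar : ∀ k : ℕ, 1 ≤ k → k ≤ N →
      ∀ t ∈ Set.Ioc (((k : ℝ) - 1) * h) ((k : ℝ) * h),
        fbar t = (1 / h) • ∫ s in (((k : ℝ) - 1) * h)..((k : ℝ) * h), f s) :
    Real.sqrt (∫ t in (0 : ℝ)..T, ‖fbar t - f t‖ ^ 2)
      ≤ Real.sqrt h * ∫ s in (0 : ℝ)..T, ‖g s‖ := by
  have hN0 : (0:ℝ) < N := by exact_mod_cast hN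
  have hh : 0 < h := by rw [hhdef]; positivity
  have hNh : (N:ℝ) * h = T := by rw [hhdef]; field_simp
  have hab' : ∀ i : ℕ, (i:ℝ)*h ≤ ((i:ℝ)+1)*h := by
    intro i
    have : (0:ℝ) ≤ (i:ℝ) := Nat.cast_nonneg i
    nlinarith [hh.le]
  -- subinterval inside [0,T]
  have hsub : ∀ i : ℕ, i < N → Set.Icc ((i:ℝ)*h) (((i:ℝ)+1)*h) ⊆ Set.Icc 0 T := by
    intro i hi
    apply Set.Icc_subset_Icc
    · positivity
    · rw [← hNh]
      have h1 : (i:ℝ)+1 ≤ (N:ℝ) := by exact_mod_cast hi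
      nlinarith [hh.le]
  -- continuity and integrability of f on [0,T]
  have hFc : ContinuousOn f (Set.Icc 0 T) := by
    have hc : ContinuousOn (fun t => f 0 + ∫ s in (0:ℝ)..t, g s) (Set.Icc 0 T) := by
      apply ContinuousOn.add continuousOn_const
      have := intervalIntegral.continuousOn_primitive_interval (a := 0) (b := T)
        (f := g) (μ := volume) (by rwa [Set.uIcc_of_le hT.le])
      rwa [Set.uIcc_of_le hT.le] at this
    exact hc.congr hf
  have hfInt : IntegrableOn f (Set.Icc 0 T) := hFc.integrableOn_Icc
  have hgInt2 : ∀ u ∈ Set.Icc (0:ℝ) T, IntervalIntegrable g volume 0 u := by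
    intro u hu
    apply MeasureTheory.IntegrableOn.intervalIntegrable
    rw [Set.uIcc_of_le hu.1]
    exact hg.mono_set (Set.Icc_subset_Icc_right hu.2)
  have hgI : ∀ i : ℕ, i < N →
      IntegrableOn (fun s => ‖g s‖) (Set.Ioc ((i:ℝ)*h) (((i:ℝ)+1)*h)) := by
    intro i hi
    exact (hg.mono_set (Set.Ioc_subset_Icc_self.trans (hsub i hi))).norm
  set Gk : ℕ → ℝ := fun i => ∫ s in Set.Ioc ((i:ℝ)*h) (((i:ℝ)+1)*h), ‖g s‖ with hGkdef
  have hGk : ∀ i, 0 ≤ Gk i := fun i =>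
    MeasureTheory.setIntegral_nonneg measurableSet_Ioc (fun x _ => norm_nonneg _)
  -- cleaned-up version of hfbar
  have hfbar' : ∀ i : ℕ, i < N → ∀ t ∈ Set.Ioc ((i:ℝ)*h) (((i:ℝ)+1)*h),
      fbar t = (1/h) • ∫ s in ((i:ℝ)*h)..(((i:ℝ)+1)*h), f s := by
    intro i hi t ht
    have h1 := hfbar (i+1) (by omega) hi t
    push_cast at h1
    rw [show ((i:ℝ)+1-1) = (i:ℝ) by ring] at h1
    exact h1 ht
  have hfi : ∀ i : ℕ, i < N → IntervalIntegrable f volume ((i:ℝ)*h) (((i:ℝ)+1)*h) := by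
    intro i hi
    apply MeasureTheory.IntegrableOn.intervalIntegrable
    rw [Set.uIcc_of_le (hab' i)]
    exact hfInt.mono_set (hsub i hi)
  -- key pointwise bound
  have key : ∀ i : ℕ, i < N → ∀ t ∈ Set.Ioc ((i:ℝ)*h) (((i:ℝ)+1)*h),
      ‖fbar t - f t‖ ≤ Gk i := by
    intro i hi t ht
    set a := (i:ℝ)*h with ha
    set b := ((i:ℝ)+1)*h with hb
    have hab : a ≤ b := hab' i
    have htI : t ∈ Set.Icc 0 T := (Set.Ioc_subset_Icc_self.trans (hsub i hi)) ht
    have hba : b - a = h := by rw [ha, hb]; ring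
    have ht' : f t = (1/h) • ∫ _ in a..b, f t := by
      rw [intervalIntegral.integral_const, hba, smul_smul, one_div,
        inv_mul_cancel₀ hh.ne', one_smul]
    have hdiff : fbar t - f t = (1/h) • ∫ s in a..b, (f s - f t) := by
      rw [intervalIntegral.integral_sub (hfi i hi) intervalIntegrable_const, smul_sub,
        ← hfbar' i hi t ht, ← ht']
    have hbound : ∀ s ∈ Set.uIoc a b, ‖f s - f t‖ ≤ Gk i := by
      intro s hs
      rw [Set.uIoc_of_le hab] at hs
      have hsI : s ∈ Set.Icc 0 T := (Set.Ioc_subset_Icc_self.trans (hsub i hi)) hs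
      have heq : f s - f t = ∫ u in t..s, g u := by
        rw [hf s hsI, hf t htI, add_sub_add_left_eq_sub]
        exact intervalIntegral.integral_interval_sub_left (hgInt2 s hsI) (hgInt2 t htI)
      rw [heq]
      calc ‖∫ u in t..s, g u‖ ≤ ∫ u in Set.uIoc t s, ‖g u‖ :=
            intervalIntegral.norm_integral_le_integral_norm_uIoc
        _ ≤ Gk i := by
            apply MeasureTheory.setIntegral_mono_set (hgI i hi)
            · filter_upwards with x using norm_nonneg _
            · apply HasSubset.Subset.eventuallyLE
              rw [Set.uIoc]
              refine Set.Ioc_subset_Ioc ?_ ?_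
              · exact le_min ht.1.le hs.1.le
              · exact max_le ht.2 hs.2
    rw [hdiff, norm_smul]
    have hbnd := intervalIntegral.norm_integral_le_of_norm_le_const hbound
    rw [hba, abs_of_pos hh] at hbnd
    rw [Real.norm_eq_abs, abs_of_pos (by positivity : (0:ℝ) < 1/h)]
    calc 1/h * ‖∫ s in a..b, (f s - f t)‖ ≤ 1/h * (Gk i * h) :=
          mul_le_mul_of_nonneg_left hbnd (by positivity)
      _ = Gk i := by field_simp
  -- integrability of the squared error on each piece
  have herrInt : ∀ i : ℕ, i < N →
      IntegrableOn (fun t => ‖fbar t - f t‖^2) (Set.Ioc ((i:ℝ)*h) (((i:ℝ)+1)*h)) := by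
    intro i hi
    set c : X := (1/h) • ∫ s in ((i:ℝ)*h)..(((i:ℝ)+1)*h), f s with hc
    have hcont : ContinuousOn (fun t => ‖c - f t‖^2) (Set.Icc ((i:ℝ)*h) (((i:ℝ)+1)*h)) :=
      ((continuousOn_const.sub (hFc.mono (hsub i hi))).norm).pow 2
    have hI : IntegrableOn (fun t => ‖c - f t‖^2) (Set.Ioc ((i:ℝ)*h) (((i:ℝ)+1)*h)) :=
      hcont.integrableOn_Icc.mono_set Set.Ioc_subset_Icc_self
    apply hI.congr_fun ?_ measurableSet_Ioc
    intro t ht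
    dsimp only
    rw [hfbar' i hi t ht]
  -- splitting of the error integral
  have hint : ∀ k < N, IntervalIntegrable (fun t => ‖fbar t - f t‖^2) volume
      ((fun k : ℕ => (k:ℝ)*h) k) ((fun k : ℕ => (k:ℝ)*h) (k+1)) := by
    intro k hk
    simp only [Nat.cast_add, Nat.cast_one]
    rw [intervalIntegrable_iff_integrableOn_Ioc_of_le (hab' k)]
    exact herrInt k hk
  have hsplit : ∫ t in (0:ℝ)..T, ‖fbar t - f t‖^2
      = ∑ i ∈ Finset.range N, ∫ t in Set.Ioc ((i:ℝ)*h) (((i:ℝ)+1)*h), ‖fbar t - f t‖^2 := by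
    have hs := intervalIntegral.sum_integral_adjacent_intervals (μ := volume)
      (a := fun k : ℕ => (k:ℝ)*h) (n := N) hint
    simp only [Nat.cast_zero, zero_mul, hNh] at hs
    rw [← hs]
    refine Finset.sum_congr rfl (fun i _ => ?_)
    rw [show ((i+1:ℕ):ℝ) = (i:ℝ)+1 by push_cast; ring,
      intervalIntegral.integral_of_le (hab' i)]
  -- piecewise bound
  have hpiece : ∀ i : ℕ, i < N →
      (∫ t in Set.Ioc ((i:ℝ)*h) (((i:ℝ)+1)*h), ‖fbar t - f t‖^2) ≤ h * (Gk i)^2 := by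
    intro i hi
    have hconst : IntegrableOn (fun _ : ℝ => (Gk i)^2) (Set.Ioc ((i:ℝ)*h) (((i:ℝ)+1)*h)) :=
      integrableOn_const measure_Ioc_lt_top.ne
    calc (∫ t in Set.Ioc ((i:ℝ)*h) (((i:ℝ)+1)*h), ‖fbar t - f t‖^2)
        ≤ ∫ _ in Set.Ioc ((i:ℝ)*h) (((i:ℝ)+1)*h), (Gk i)^2 := by
          apply MeasureTheory.setIntegral_mono_on (herrInt i hi) hconst measurableSet_Ioc
          intro t ht
          exact pow_le_pow_left₀ (norm_nonneg _) (key i hi t ht) 2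
      _ = h * (Gk i)^2 := by
          rw [MeasureTheory.setIntegral_const, Real.volume_real_Ioc_of_le (hab' i), smul_eq_mul,
            show ((i:ℝ)+1)*h - (i:ℝ)*h = h by ring]
  -- splitting of the norm integral of g
  have hgint : ∀ k < N, IntervalIntegrable (fun s => ‖g s‖) volume
      ((fun k : ℕ => (k:ℝ)*h) k) ((fun k : ℕ => (k:ℝ)*h) (k+1)) := by
    intro k hk
    simp only [Nat.cast_add, Nat.cast_one]
    rw [intervalIntegrable_iff_integrableOn_Ioc_of_le (hab' k)]
    exact hgI k hk
  have hGsplit : ∫ s in (0:ℝ)..T, ‖g s‖ = ∑ i ∈ Finset.range N, Gk i := by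
    have hs := intervalIntegral.sum_integral_adjacent_intervals (μ := volume)
      (a := fun k : ℕ => (k:ℝ)*h) (n := N) hgint
    simp only [Nat.cast_zero, zero_mul, hNh] at hs
    rw [← hs]
    refine Finset.sum_congr rfl (fun i _ => ?_)
    rw [show ((i+1:ℕ):ℝ) = (i:ℝ)+1 by push_cast; ring,
      intervalIntegral.integral_of_le (hab' i)]
  -- sum of squares bound
  have hsq : ∑ i ∈ Finset.range N, (Gk i)^2 ≤ (∑ i ∈ Finset.range N, Gk i)^2 := by
    calc ∑ i ∈ Finset.range N, (Gk i)^2 = ∑ i ∈ Finset.range N, Gk i * Gk i := by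
          simp [sq]
      _ ≤ ∑ i ∈ Finset.range N, Gk i * (∑ j ∈ Finset.range N, Gk j) :=
          Finset.sum_le_sum (fun i hi => mul_le_mul_of_nonneg_left
            (Finset.single_le_sum (fun j _ => hGk j) hi) (hGk i))
      _ = (∑ i ∈ Finset.range N, Gk i)^2 := by rw [← Finset.sum_mul, sq]
  have hGnn : 0 ≤ ∫ s in (0:ℝ)..T, ‖g s‖ := by
    rw [hGsplit]; exact Finset.sum_nonneg (fun i _ => hGk i)
  have hle : ∫ t in (0:ℝ)..T, ‖fbar t - f t‖^2 ≤ h * (∫ s in (0:ℝ)..T, ‖g s‖)^2 := by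
    rw [hsplit, hGsplit]
    calc ∑ i ∈ Finset.range N, ∫ t in Set.Ioc ((i:ℝ)*h) (((i:ℝ)+1)*h), ‖fbar t - f t‖^2
        ≤ ∑ i ∈ Finset.range N, h * (Gk i)^2 :=
          Finset.sum_le_sum (fun i hi => hpiece i (Finset.mem_range.mp hi))
      _ = h * ∑ i ∈ Finset.range N, (Gk i)^2 := by rw [Finset.mul_sum]
      _ ≤ h * (∑ i ∈ Finset.range N, Gk i)^2 := mul_le_mul_of_nonneg_left hsq hh.le
  calc Real.sqrt (∫ t in (0:ℝ)..T, ‖fbar t - f t‖^2)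
      ≤ Real.sqrt (h * (∫ s in (0:ℝ)..T, ‖g s‖)^2) := Real.sqrt_le_sqrt hle
    _ = Real.sqrt h * ∫ s in (0:ℝ)..T, ‖g s‖ := by
        rw [Real.sqrt_mul hh.le, Real.sqrt_sq hGnn]
end
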